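/- Let σ : E → B be a representation of the semilattice E in a Boolean algebra B. Assume that either (i) there exists a finite subset X ⊆ E with ⨆_{x∈X} σ x = ⊤, or (ii) E admits no finite cover (of E itself). Then σ is tight if and only if for every x ∈ E with x ≠ 0 and every finite cover Z of the interval [0, x] = {z ∈ E : z ≤ x}, one has σ x ≤ ⨆_{z∈Z} σ z. -/

import Mathlib

variable {E B : Type*} [SemilatticeInf E] [OrderBot E] [BooleanAlgebra B]

/-- A representation of the semilattice `E` in the Boolean algebra `B`. -/
def IsRepresentation (σ : E → B) : Prop :=
  σ ⊥ = ⊥ ∧ ∀ x y : E, σ (x ⊓ y) = σ x ⊓ σ y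

/-- The set `E^{X,Y}` for finite subsets `X, Y ⊆ E`. -/
def eSet (X Y : Finset E) : Set E :=
  {z | (∀ x ∈ X, z ≤ x) ∧ ∀ y ∈ Y, z ⊓ y = ⊥}

/-- `Z` is a cover for `F`. -/
def IsCover (Z F : Set E) : Prop :=
  Z ⊆ F ∧ ∀ x ∈ F, x ≠ ⊥ → ∃ z ∈ Z, z ⊓ x ≠ ⊥

/-- Tightness of a representation. -/
def IsTight (σ : E → B) : Prop :=
  ∀ X Y Z : Finset E, IsCover (↑Z) (eSet X Y) →
    (X.inf σ ⊓ Y.inf fun y => (σ y)ᶜ) ≤ Z.sup σ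

lemma rep_inf' (σ : E → B) (hσ : IsRepresentation σ) (X : Finset E) (hX : X.Nonempty) :
    σ (X.inf' hX id) = X.inf σ := by
  induction hX using Finset.Nonempty.cons_induction with
  | singleton a => simp
  | cons a s ha hs ih =>
    rw [Finset.inf'_cons, Finset.inf_cons, hσ.2, ih]; rfl; exact hs

lemma key_lemma (σ : E → B) (hσ : IsRepresentation σ)
    (h' : ∀ x : E, x ≠ ⊥ → ∀ Z : Finset E, IsCover (↑Z) {z : E | z ≤ x} → σ x ≤ Z.sup σ)
    (x : E) (Y Z : Finset E)
    (hcov : ∀ w : E, w ≤ x → (∀ y ∈ Y, w ⊓ y = ⊥) → w ≠ ⊥ → ∃ z ∈ Z, z ⊓ w ≠ ⊥) :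
    σ x ⊓ Y.inf (fun y => (σ y)ᶜ) ≤ Z.sup σ := by
  classical
  by_cases hx : x = ⊥
  · simp [hx, hσ.1]
  have hc : IsCover (↑((Z ∪ Y).image (x ⊓ ·))) {z : E | z ≤ x} := by
    constructor
    · intro w hw
      simp only [Finset.coe_image, Set.mem_image, Finset.mem_coe] at hw
      obtain ⟨a, _, rfl⟩ := hw
      exact inf_le_left
    · intro w hw hw0
      by_cases hY : ∀ y ∈ Y, w ⊓ y = ⊥
      · obtain ⟨z, hz, hzw⟩ := hcov w hw hY hw0
        refine ⟨x ⊓ z, Finset.mem_coe.mpr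
          (Finset.mem_image_of_mem _ (Finset.mem_union_left _ hz)), ?_⟩
        have hzwx : x ⊓ z ⊓ w = z ⊓ w := by
          rw [inf_assoc]
          exact inf_eq_right.mpr (le_trans inf_le_right hw)
        rw [hzwx]; exact hzw
      · push_neg at hY
        obtain ⟨y, hy, hwy⟩ := hY
        refine ⟨x ⊓ y, Finset.mem_coe.mpr
          (Finset.mem_image_of_mem _ (Finset.mem_union_right _ hy)), ?_⟩
        have : x ⊓ y ⊓ w = w ⊓ y := by
          rw [inf_right_comm, inf_eq_right.mpr hw]
        rw [this]; exact hwy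
  have h1 : σ x ≤ (Z ∪ Y).sup (fun a => σ x ⊓ σ a) := by
    have h2 := h' x hx _ hc
    rwa [Finset.sup_image,
      show (σ ∘ (x ⊓ ·)) = fun a => σ x ⊓ σ a from funext fun a => hσ.2 x a] at h2
  calc σ x ⊓ Y.inf (fun y => (σ y)ᶜ)
      ≤ ((Z ∪ Y).sup fun a => σ x ⊓ σ a) ⊓ Y.inf (fun y => (σ y)ᶜ) :=
        inf_le_inf_right _ h1
    _ = (Z ∪ Y).sup (fun a => (σ x ⊓ σ a) ⊓ Y.inf fun y => (σ y)ᶜ) :=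
        Finset.sup_inf_distrib_right _ _ _
    _ ≤ Z.sup σ := by
        refine Finset.sup_le fun a ha => ?_
        rcases Finset.mem_union.mp ha with h|h
        · exact le_trans (le_trans inf_le_left inf_le_right) (Finset.le_sup h)
        · have hC : Y.inf (fun y => (σ y)ᶜ) ≤ (σ a)ᶜ := Finset.inf_le h
          calc σ x ⊓ σ a ⊓ Y.inf (fun y => (σ y)ᶜ) ≤ σ a ⊓ (σ a)ᶜ :=
                inf_le_inf inf_le_right hC
            _ = ⊥ := inf_compl_eq_bot
            _ ≤ _ := bot_le

theorem tight_iff_of_alt (σ : E → B) (hσ : IsRepresentation σ)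
    (h : (∃ X : Finset E, X.sup σ = ⊤) ∨ ¬∃ Z : Finset E, IsCover (↑Z) (Set.univ : Set E)) :
    IsTight σ ↔
      ∀ x : E, x ≠ ⊥ → ∀ Z : Finset E, IsCover (↑Z) {z : E | z ≤ x} → σ x ≤ Z.sup σ := by
  classical
  constructor
  · intro ht x hx Z hZ
    have hset : eSet {x} (∅ : Finset E) = {z : E | z ≤ x} := by
      ext z; simp [eSet]
    have := ht {x} ∅ Z (by rw [hset]; exact hZ)
    simpa using this
  · intro h' X Y Z hZ
    rcases X.eq_empty_or_nonempty with rfl | hX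
    · rcases h with ⟨X₀, hX₀⟩ | hnc
      · have hkey : ∀ a ∈ X₀, σ a ⊓ Y.inf (fun y => (σ y)ᶜ) ≤ Z.sup σ := by
          intro a _
          refine key_lemma σ hσ h' a Y Z ?_
          intro w _ hwY hw0
          exact hZ.2 w ⟨fun x hx => absurd hx (Finset.notMem_empty x), hwY⟩ hw0
        calc (∅ : Finset E).inf σ ⊓ Y.inf (fun y => (σ y)ᶜ)
            = X₀.sup σ ⊓ Y.inf (fun y => (σ y)ᶜ) := by
              rw [Finset.inf_empty, hX₀]
          _ = X₀.sup (fun a => σ a ⊓ Y.inf fun y => (σ y)ᶜ) :=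
              Finset.sup_inf_distrib_right _ _ _
          _ ≤ Z.sup σ := Finset.sup_le hkey
      · exfalso
        apply hnc
        refine ⟨Z ∪ Y, fun _ _ => trivial, ?_⟩
        intro x _ hx0
        by_cases hY : ∀ y ∈ Y, x ⊓ y = ⊥
        · obtain ⟨z, hz, hzx⟩ := hZ.2 x
            ⟨fun x hx => absurd hx (Finset.notMem_empty x), hY⟩ hx0
          exact ⟨z, Finset.mem_coe.mpr (Finset.mem_union_left _ (Finset.mem_coe.mp hz)), hzx⟩
        · push_neg at hY
          obtain ⟨y, hy, hxy⟩ := hY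
          exact ⟨y, Finset.mem_coe.mpr (Finset.mem_union_right _ hy),
            by rwa [inf_comm] at hxy⟩
    · have hm : σ (X.inf' hX id) = X.inf σ := rep_inf' σ hσ X hX
      have hres : σ (X.inf' hX id) ⊓ Y.inf (fun y => (σ y)ᶜ) ≤ Z.sup σ := by
        refine key_lemma σ hσ h' _ Y Z ?_
        intro w hw hwY hw0
        exact hZ.2 w ⟨fun x hxX => le_trans hw (Finset.inf'_le id hxX), hwY⟩ hw0
      rwa [hm] at hres
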